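/- Let λ∈P satisfy ⟨λ,α∨⟩≠−1 for all α∈Φ⁺ and let 𝐤∈ℕ[Φ]^W. Then the connected component Y of →_{sym,𝐤} containing η_𝐤(λ) contains the orbit w_λ(W_{I^{0,1}_λ}(η_𝐤(λ_dom))). Moreover, in the special case 𝐤=0, Y is exactly equal to w_λ(W_{I^{0,1}_λ}(λ_dom)). -/

import Mathlib

open RealInnerProductSpace Pointwise

noncomputable section

variable {V : Type*} [NormedAddCommGroup V] [InnerProductSpace ℝ V]

/-- The coroot `α∨ = 2α/⟨α,α⟩` associated to a vector `α`. -/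
def coroot (α : V) : V := (2 / ⟪α, α⟫) • α

/-- The reflection `s_α(v) = v − ⟨v,α∨⟩α` across the hyperplane orthogonal to `α`. -/
def sRefl (α : V) (v : V) : V := v - ⟪v, coroot α⟫ • α

/-- An irreducible reduced crystallographic root system in the real inner product
space `V`, together with a chosen set of positive roots and simple roots. -/
structure RootSystemData (V : Type*) [NormedAddCommGroup V] [InnerProductSpace ℝ V] where
  n : ℕ
  roots : Set V
  roots_finite : roots.Finite
  roots_nonzero : (0 : V) ∉ roots
  roots_span : Submodule.span ℝ roots = ⊤
  refl_mem : ∀ α ∈ roots, ∀ β ∈ roots, sRefl α β ∈ roots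
  reduced : ∀ α ∈ roots, ∀ c : ℝ, c • α ∈ roots → c • α = α ∨ c • α = -α
  crystallographic : ∀ α ∈ roots, ∀ β ∈ roots, ∃ m : ℤ, ⟪β, coroot α⟫ = (m : ℝ)
  pos : Set V
  pos_subset : pos ⊆ roots
  pos_union : roots = pos ∪ (-pos)
  simple : Fin n → V
  simple_mem : ∀ i, simple i ∈ pos
  simple_li : LinearIndependent ℝ simple
  simple_span : Submodule.span ℝ (Set.range simple) = ⊤
  pos_combo : ∀ α ∈ pos, ∃ c : Fin n → ℕ, α = ∑ i, (c i : ℝ) • simple i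
  irred : ∀ S₁ S₂ : Set V, roots = S₁ ∪ S₂ →
    (∀ α ∈ S₁, ∀ β ∈ S₂, ⟪α, β⟫ = 0) → S₁ = ∅ ∨ S₂ = ∅

namespace RootSystemData

variable (R : RootSystemData V)

/-- The Weyl group `W`: all finite compositions of reflections in roots. -/
def weyl : Set (V → V) :=
  {w | ∃ l : List V, (∀ α ∈ l, α ∈ R.roots) ∧ w = (l.map sRefl).foldr (· ∘ ·) id}

/-- The orbit `W(v)` of a vector under the Weyl group. -/
def orbit (v : V) : Set V := {u | ∃ w ∈ R.weyl, u = w v}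

/-- The weight lattice `P`. -/
def weightLattice : Set V :=
  {v | ∀ α ∈ R.roots, ∃ m : ℤ, ⟪v, coroot α⟫ = (m : ℝ)}

/-- The permutohedron `Π(v) = ConvexHull W(v)`. -/
def perm (v : V) : Set V := convexHull ℝ (R.orbit v)

/-- The discrete permutohedron `Π^Q(λ) = Π(λ) ∩ (Q+λ)`. -/
def permQ (lam : V) : Set V :=
  R.perm lam ∩ {v | v - lam ∈ Submodule.span ℤ R.roots}

/-- Dominance: nonnegative pairing with all simple coroots. -/
def IsDominant (v : V) : Prop := ∀ i, 0 ≤ ⟪v, coroot (R.simple i)⟫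

/-- `W`-invariance of a function `𝐤 : Φ → ℕ`. -/
def IsWInvariant (k : V → ℕ) : Prop := ∀ w ∈ R.weyl, ∀ α ∈ R.roots, k (w α) = k α

/-- Symmetric interval-firing: `λ → λ+α` for `α ∈ Φ⁺` whenever
`⟨λ,α∨⟩+1 ∈ {−𝐤(α),…,𝐤(α)}`. -/
def symFire (k : V → ℕ) (lam mu : V) : Prop :=
  lam ∈ R.weightLattice ∧ ∃ α ∈ R.pos, mu = lam + α ∧
    -(k α : ℝ) ≤ ⟪lam, coroot α⟫ + 1 ∧ ⟪lam, coroot α⟫ + 1 ≤ (k α : ℝ)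

/-- Truncated interval-firing: `λ → λ+α` for `α ∈ Φ⁺` whenever
`⟨λ,α∨⟩+1 ∈ {−𝐤(α)+1,…,𝐤(α)}`. -/
def trFire (k : V → ℕ) (lam mu : V) : Prop :=
  lam ∈ R.weightLattice ∧ ∃ α ∈ R.pos, mu = lam + α ∧
    -(k α : ℝ) + 1 ≤ ⟪lam, coroot α⟫ + 1 ∧ ⟪lam, coroot α⟫ + 1 ≤ (k α : ℝ)

/-- All roots have the same length. -/
def SimplyLaced : Prop := ∀ α ∈ R.roots, ∀ β ∈ R.roots, ‖α‖ = ‖β‖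

/-- A root of maximal length. -/
def IsLongRoot (α : V) : Prop := α ∈ R.roots ∧ ∀ β ∈ R.roots, ‖β‖ ≤ ‖α‖

/-- A root which is not of maximal length. -/
def IsShortRoot (α : V) : Prop := α ∈ R.roots ∧ ¬ R.IsLongRoot α

/-- `𝐤` is good: either `Φ` is simply laced, or `𝐤` vanishing on short roots
implies `𝐤` vanishing on all (in particular long) roots. -/
def IsGood (k : V → ℕ) : Prop :=
  R.SimplyLaced ∨ ((∀ α, R.IsShortRoot α → k α = 0) → ∀ β ∈ R.roots, k β = 0)

/-- The product of the simple reflections indexed by a word. -/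
def wordProd (l : List (Fin R.n)) : V → V :=
  (l.map (fun i => sRefl (R.simple i))).foldr (· ∘ ·) id

/-- Coxeter length: the minimal length of a word in the simple reflections
expressing `w`. -/
def coxLen (w : V → V) : ℕ :=
  sInf {m : ℕ | ∃ l : List (Fin R.n), l.length = m ∧ w = R.wordProd l}

/-- The parabolic subgroup `W_I`: all compositions of simple reflections `s_{αᵢ}`, `i ∈ I`. -/
def weylI (I : Set (Fin R.n)) : Set (V → V) :=
  {w | ∃ l : List (Fin R.n), (∀ i ∈ l, i ∈ I) ∧ w = R.wordProd l}

/-- The orbit `W_I(v)`. -/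
def orbitI (I : Set (Fin R.n)) (v : V) : Set V := {u | ∃ w ∈ R.weylI I, u = w v}

/-- The discrete parabolic permutohedron `Π^Q_I(λ)`. -/
def permQI (I : Set (Fin R.n)) (lam : V) : Set V :=
  convexHull ℝ (R.orbitI I lam) ∩ {v | v - lam ∈ Submodule.span ℤ R.roots}

/-- Given a choice `dm` of dominant representatives, `I^{0,1}_λ` is the set of
indices `i` with `⟨λ_dom, αᵢ∨⟩ ∈ {0,1}`. -/
def I01 (dm : V → V) (lam : V) : Set (Fin R.n) :=
  {i | ⟪dm lam, coroot (R.simple i)⟫ = 0 ∨ ⟪dm lam, coroot (R.simple i)⟫ = 1}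

/-- The minimal length of an `α`-traverse in `Π^Q(λ)`. -/
def traverseLen (lam α : V) : ℕ :=
  sInf {ℓ : ℕ | ∃ mu : V, (∀ i : ℕ, i ≤ ℓ → mu - (i : ℝ) • α ∈ R.permQ lam) ∧
    mu + α ∉ R.permQ lam ∧ mu - ((ℓ : ℝ) + 1) • α ∉ R.permQ lam}

/-- `m_λ(α) = min {cᵢ : αᵢ ∈ W(α)}` where `λ = Σ cᵢ ωᵢ` is dominant,
i.e. `cᵢ = ⟨λ, αᵢ∨⟩`. -/
def mVal (lam α : V) : ℕ :=
  sInf {c : ℕ | ∃ i, R.simple i ∈ R.orbit α ∧ (c : ℝ) = ⟪lam, coroot (R.simple i)⟫}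

/-- Funny weights (only exist when `Φ` is not simply laced). -/
def IsFunny (lam : V) : Prop :=
  ¬ R.SimplyLaced ∧ ∃ l s : Fin R.n, R.IsLongRoot (R.simple l) ∧ R.IsShortRoot (R.simple s) ∧
    ⟪R.simple l, coroot (R.simple s)⟫ ≠ 0 ∧
    ⟪lam, coroot (R.simple s)⟫ = 0 ∧ 1 ≤ ⟪lam, coroot (R.simple l)⟫ ∧
    ∀ i, R.IsLongRoot (R.simple i) → ⟪lam, coroot (R.simple l)⟫ ≤ ⟪lam, coroot (R.simple i)⟫

end RootSystemData

/-- The map `η_𝐤(λ) = λ + w_λ(ρ_𝐤)`, relative to a choice `fw` of fundamental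
weights and a choice `wl` of minimal-length Weyl elements `λ ↦ w_λ`. -/
def etaMap (R : RootSystemData V) (fw : Fin R.n → V) (wl : V → V → V)
    (k : V → ℕ) (lam : V) : V :=
  lam + wl lam (∑ i, (k (R.simple i) : ℝ) • fw i)

/-- Two points are in the same connected component of a relation if they are
related by its reflexive-transitive-symmetric closure. -/
def SameComponent (r : V → V → Prop) (x y : V) : Prop :=
  Relation.ReflTransGen (fun a b => r a b ∨ r b a) x y


namespace SF13
open RealInnerProductSpace

variable {V : Type*} [NormedAddCommGroup V] [InnerProductSpace ℝ V]

/-! ### Basic facts about `coroot` and `sRefl` -/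

lemma inner_coroot_right (v α : V) : ⟪v, coroot α⟫ = (2 / ⟪α, α⟫) * ⟪v, α⟫ := by
  simp [coroot, real_inner_smul_right]

lemma inner_self_pos' {α : V} (hα : α ≠ 0) : 0 < ⟪α, α⟫ := by
  rw [real_inner_self_eq_norm_sq]
  exact pow_pos (norm_pos_iff.2 hα) 2

lemma inner_self_coroot {α : V} (hα : α ≠ 0) : ⟪α, coroot α⟫ = 2 := by
  rw [inner_coroot_right]
  have h : ⟪α, α⟫ ≠ 0 := ne_of_gt (inner_self_pos' hα)
  field_simp

lemma sRefl_zero : sRefl (0 : V) = id := by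
  funext v; simp [sRefl, coroot]

lemma sRefl_add (α x y : V) : sRefl α (x + y) = sRefl α x + sRefl α y := by
  simp only [sRefl, inner_add_left, add_smul]; abel

lemma sRefl_smul (α : V) (r : ℝ) (x : V) : sRefl α (r • x) = r • sRefl α x := by
  simp only [sRefl, real_inner_smul_left, smul_sub, mul_smul]

lemma sRefl_sub (α x y : V) : sRefl α (x - y) = sRefl α x - sRefl α y := by
  simp only [sRefl, inner_sub_left, sub_smul]; abel

lemma sRefl_apply_self {α : V} (hα : α ≠ 0) : sRefl α α = -α := by
  simp only [sRefl, inner_self_coroot hα, two_smul]; abel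

lemma sRefl_inner (α x y : V) : ⟪sRefl α x, sRefl α y⟫ = ⟪x, y⟫ := by
  rcases eq_or_ne α 0 with rfl | hα
  · simp [sRefl_zero]
  have hS : ⟪α, α⟫ ≠ 0 := ne_of_gt (inner_self_pos' hα)
  simp only [sRefl, inner_sub_left, inner_sub_right, real_inner_smul_left,
    real_inner_smul_right, inner_coroot_right]
  have h2 : ⟪y, α⟫ = ⟪α, y⟫ := real_inner_comm _ _
  field_simp
  linear_combination (2 * (⟪x, α⟫ : ℝ)) * h2

lemma sRefl_involutive (α : V) (v : V) : sRefl α (sRefl α v) = v := by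
  rcases eq_or_ne α 0 with rfl | hα
  · simp [sRefl_zero]
  simp only [sRefl, inner_sub_left, real_inner_smul_left, inner_self_coroot hα]
  module

lemma coroot_neg (α : V) : coroot (-α) = - coroot α := by
  simp [coroot, smul_neg]

lemma sRefl_neg (α : V) : sRefl (-α) = sRefl α := by
  funext v; simp [sRefl, coroot_neg]

/-! ### Products of reflections along a list -/

/-- The composite of the reflections along a list of vectors. -/
def lprod (L : List V) : V → V := (L.map sRefl).foldr (· ∘ ·) id

@[simp] lemma lprod_nil : lprod ([] : List V) = id := rfl

@[simp] lemma lprod_cons (a : V) (L : List V) :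
    lprod (a :: L) = sRefl a ∘ lprod L := rfl

lemma lprod_append (A B : List V) : lprod (A ++ B) = lprod A ∘ lprod B := by
  induction A with
  | nil => rfl
  | cons a A ih => simp [ih, Function.comp_assoc]

lemma lprod_add (L : List V) (x y : V) : lprod L (x + y) = lprod L x + lprod L y := by
  induction L with
  | nil => rfl
  | cons a L ih => simp [Function.comp_apply, ih, sRefl_add]

lemma lprod_smul (L : List V) (r : ℝ) (x : V) : lprod L (r • x) = r • lprod L x := by
  induction L with
  | nil => rfl
  | cons a L ih => simp [Function.comp_apply, ih, sRefl_smul]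

lemma lprod_sub (L : List V) (x y : V) : lprod L (x - y) = lprod L x - lprod L y := by
  induction L with
  | nil => rfl
  | cons a L ih => simp [Function.comp_apply, ih, sRefl_sub]

lemma lprod_inner (L : List V) (x y : V) : ⟪lprod L x, lprod L y⟫ = ⟪x, y⟫ := by
  induction L with
  | nil => rfl
  | cons a L ih => simp [Function.comp_apply, sRefl_inner, ih]

lemma lprod_reverse_apply (L : List V) (x : V) :
    lprod L.reverse (lprod L x) = x := by
  induction L generalizing x with
  | nil => rfl
  | cons a L ih =>
    have h1 : lprod (a :: L) x = sRefl a (lprod L x) := rfl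
    have h2 : lprod (a :: L).reverse = lprod L.reverse ∘ lprod [a] := by
      rw [List.reverse_cons, lprod_append]
    rw [h1, h2, Function.comp_apply]
    have h3 : lprod [a] (sRefl a (lprod L x)) = lprod L x := by
      show sRefl a (id (sRefl a (lprod L x))) = lprod L x
      rw [id, sRefl_involutive]
    rw [h3, ih]

lemma lprod_reverse_apply' (L : List V) (x : V) :
    lprod L (lprod L.reverse x) = x := by
  have := lprod_reverse_apply L.reverse x
  rwa [List.reverse_reverse] at this

lemma lprod_coroot (L : List V) (x : V) : coroot (lprod L x) = lprod L (coroot x) := by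
  rw [coroot, coroot, lprod_inner, lprod_smul]

lemma lprod_zero (L : List V) : lprod L (0 : V) = 0 := by
  have := lprod_smul L 0 (0 : V)
  simpa using this

lemma lprod_ne_zero (L : List V) {x : V} (hx : x ≠ 0) : lprod L x ≠ 0 := by
  intro h
  apply hx
  have h1 := lprod_reverse_apply L x
  rw [h, lprod_zero] at h1
  exact h1.symm

end SF13

namespace SF13
open RealInnerProductSpace

variable {V : Type*} [NormedAddCommGroup V] [InnerProductSpace ℝ V]
variable (R : RootSystemData V)

lemma root_ne_zero {γ : V} (hγ : γ ∈ R.roots) : γ ≠ 0 := by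
  rintro rfl; exact R.roots_nonzero hγ

lemma neg_root_mem {γ : V} (hγ : γ ∈ R.roots) : -γ ∈ R.roots := by
  rw [R.pos_union] at hγ ⊢
  rcases hγ with h | h
  · exact Or.inr (by simpa using h)
  · exact Or.inl (by simpa using h)

lemma root_pos_or_neg {γ : V} (hγ : γ ∈ R.roots) : γ ∈ R.pos ∨ -γ ∈ R.pos := by
  rw [R.pos_union] at hγ
  rcases hγ with h | h
  · exact Or.inl h
  · exact Or.inr (by simpa using h)

lemma simple_root_mem (j : Fin R.n) : R.simple j ∈ R.roots :=
  R.pos_subset (R.simple_mem j)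

lemma simple_ne_zero (j : Fin R.n) : R.simple j ≠ 0 :=
  root_ne_zero R (simple_root_mem R j)

lemma lprod_root_mem {L : List V} (hL : ∀ a ∈ L, a ∈ R.roots) {γ : V}
    (hγ : γ ∈ R.roots) : lprod L γ ∈ R.roots := by
  induction L with
  | nil => exact hγ
  | cons a L ih =>
    have ha : a ∈ R.roots := hL a List.mem_cons_self
    have h' : lprod L γ ∈ R.roots := ih (fun b hb => hL b (List.mem_cons_of_mem a hb))
    exact R.refl_mem a ha _ h'

lemma lprod_mem_weyl {L : List V} (hL : ∀ a ∈ L, a ∈ R.roots) : lprod L ∈ R.weyl :=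
  ⟨L, hL, rfl⟩

lemma reverse_roots {L : List V} (hL : ∀ a ∈ L, a ∈ R.roots) :
    ∀ a ∈ L.reverse, a ∈ R.roots := fun a ha => hL a (List.mem_reverse.1 ha)

lemma lattice_add {u v : V} (hu : u ∈ R.weightLattice) (hv : v ∈ R.weightLattice) :
    u + v ∈ R.weightLattice := by
  intro β hβ
  obtain ⟨m₁, h₁⟩ := hu β hβ
  obtain ⟨m₂, h₂⟩ := hv β hβ
  exact ⟨m₁ + m₂, by rw [inner_add_left, h₁, h₂]; push_cast; ring⟩

lemma lattice_add_zsmul {v γ : V} (hv : v ∈ R.weightLattice) (hγ : γ ∈ R.roots)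
    (t : ℤ) : v + (t : ℝ) • γ ∈ R.weightLattice := by
  intro β hβ
  obtain ⟨m₁, h₁⟩ := hv β hβ
  obtain ⟨m₂, h₂⟩ := R.crystallographic β hβ γ hγ
  exact ⟨m₁ + t * m₂, by
    rw [inner_add_left, real_inner_smul_left, h₁, h₂]; push_cast; ring⟩

lemma lprod_lattice {L : List V} (hL : ∀ a ∈ L, a ∈ R.roots) {v : V}
    (hv : v ∈ R.weightLattice) : lprod L v ∈ R.weightLattice := by
  intro β hβ
  have hγ : lprod L.reverse β ∈ R.roots :=
    lprod_root_mem R (reverse_roots R hL) hβ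
  obtain ⟨m, hm⟩ := hv _ hγ
  refine ⟨m, ?_⟩
  have : ⟪lprod L v, coroot β⟫ = ⟪v, lprod L.reverse (coroot β)⟫ := by
    conv_lhs => rw [← lprod_reverse_apply' L (coroot β)]
    rw [lprod_inner]
  rw [this, ← lprod_coroot, hm]

lemma coords_unique {a b : Fin R.n → ℝ}
    (h : ∑ i, a i • R.simple i = ∑ i, b i • R.simple i) : a = b := by
  have hli := R.simple_li
  rw [Fintype.linearIndependent_iff] at hli
  funext i
  have h0 : ∑ i, (a i - b i) • R.simple i = 0 := by
    simp only [sub_smul, Finset.sum_sub_distrib, h, sub_self]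
  have := hli (fun i => a i - b i) h0 i
  linarith [this]

lemma pos_not_neg {γ : V} (hγ : γ ∈ R.pos) (hγ' : -γ ∈ R.pos) : False := by
  obtain ⟨c, hc⟩ := R.pos_combo γ hγ
  obtain ⟨d, hd⟩ := R.pos_combo (-γ) hγ'
  have h : ∑ i, ((c i : ℝ) + (d i : ℝ)) • R.simple i = ∑ i, (0 : ℝ) • R.simple i := by
    simp only [add_smul, Finset.sum_add_distrib, ← hc, ← hd, zero_smul,
      Finset.sum_const_zero]
    abel
  have h2 := coords_unique R h
  have hγ0 : γ = 0 := by
    rw [hc]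
    apply Finset.sum_eq_zero
    intro i _
    have hi : (c i : ℝ) + (d i : ℝ) = 0 := congrFun h2 i
    have hc0 : (c i : ℝ) = 0 := by
      have h1 : (0:ℝ) ≤ (c i : ℝ) := Nat.cast_nonneg _
      have h2 : (0:ℝ) ≤ (d i : ℝ) := Nat.cast_nonneg _
      linarith
    rw [hc0, zero_smul]
  exact root_ne_zero R (R.pos_subset hγ) hγ0

lemma dominant_nonneg {lamd : V} (hdom : R.IsDominant lamd) {δ : V} (hδ : δ ∈ R.pos) :
    0 ≤ ⟪lamd, coroot δ⟫ := by
  obtain ⟨c, hc⟩ := R.pos_combo δ hδ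
  rw [inner_coroot_right]
  have hδ0 : δ ≠ 0 := root_ne_zero R (R.pos_subset hδ)
  have hS : 0 < ⟪δ, δ⟫ := inner_self_pos' hδ0
  apply mul_nonneg (by positivity)
  rw [hc, inner_sum]
  apply Finset.sum_nonneg
  intro i _
  rw [real_inner_smul_right]
  apply mul_nonneg (by positivity)
  have hi := hdom i
  rw [inner_coroot_right] at hi
  have hSi : 0 < ⟪R.simple i, R.simple i⟫ := inner_self_pos' (simple_ne_zero R i)
  have hq : 0 < 2 / ⟪R.simple i, R.simple i⟫ := by positivity
  nlinarith [hi, hq]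

lemma pick_j {γ : V} (hγ : γ ∈ R.pos) {c : Fin R.n → ℕ}
    (hc : γ = ∑ i, (c i : ℝ) • R.simple i) :
    ∃ j, 0 < c j ∧ 0 < ⟪γ, coroot (R.simple j)⟫ ∧ 0 < ⟪R.simple j, coroot γ⟫ := by
  have hγ0 : γ ≠ 0 := root_ne_zero R (R.pos_subset hγ)
  have hS : 0 < ⟪γ, γ⟫ := inner_self_pos' hγ0
  have hsum : ⟪γ, γ⟫ = ∑ i, (c i : ℝ) * ⟪γ, R.simple i⟫ := by
    nth_rewrite 2 [hc]
    rw [inner_sum]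
    exact Finset.sum_congr rfl fun i _ => real_inner_smul_right _ _ _
  have hex : ∃ i, 0 < (c i : ℝ) * ⟪γ, R.simple i⟫ := by
    by_contra h
    push_neg at h
    have : ⟪γ, γ⟫ ≤ 0 := hsum ▸ Finset.sum_nonpos (fun i _ => h i)
    linarith
  obtain ⟨j, hj⟩ := hex
  have hcj : 0 < c j := by
    rcases Nat.eq_zero_or_pos (c j) with h | h
    · rw [h] at hj; simp at hj
    · exact h
  have hinner : 0 < ⟪γ, R.simple j⟫ := by
    rcases lt_or_ge 0 ⟪γ, R.simple j⟫ with h | h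
    · exact h
    · nlinarith [hj, (by positivity : (0:ℝ) ≤ (c j : ℝ))]
  have hSj : 0 < ⟪R.simple j, R.simple j⟫ := inner_self_pos' (simple_ne_zero R j)
  refine ⟨j, hcj, ?_, ?_⟩
  · rw [inner_coroot_right]
    exact mul_pos (div_pos two_pos hSj) hinner
  · rw [inner_coroot_right]
    have : ⟪R.simple j, γ⟫ = ⟪γ, R.simple j⟫ := real_inner_comm _ _
    rw [this]
    exact mul_pos (div_pos two_pos hS) hinner

end SF13

namespace SF13
open RealInnerProductSpace

variable {V : Type*} [NormedAddCommGroup V] [InnerProductSpace ℝ V]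
variable (R : RootSystemData V)

@[simp] lemma lprod_singleton (a v : V) : lprod [a] v = sRefl a v := rfl

lemma sRefl_coroot (α x : V) : coroot (sRefl α x) = sRefl α (coroot x) := by
  have := lprod_coroot [α] x
  simpa using this

lemma inner_sRefl_right (α x y : V) : ⟪x, sRefl α y⟫ = ⟪sRefl α x, y⟫ := by
  conv_lhs => rw [← sRefl_involutive α x]
  rw [sRefl_inner]

lemma sRefl_apply (α v : V) : sRefl α v = v - ⟪v, coroot α⟫ • α := rfl

lemma pairing_ge_one {γ β : V} (hγ : γ ∈ R.roots) (hβ : β ∈ R.roots)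
    (h : 0 < ⟪β, coroot γ⟫) : (1 : ℝ) ≤ ⟪β, coroot γ⟫ := by
  obtain ⟨m, hm⟩ := R.crystallographic γ hγ β hβ
  rw [hm] at h ⊢
  exact_mod_cast (by exact_mod_cast h : (0:ℤ) < m)

/-- Reflecting a positive root in a simple root whose support is not just `j`
stays positive, with controlled coordinates. -/
lemma sRefl_simple_pos {γ : V} (hγ : γ ∈ R.pos) {c : Fin R.n → ℕ}
    (hc : γ = ∑ i, (c i : ℝ) • R.simple i) (j : Fin R.n)
    (hne : ∃ i, i ≠ j ∧ 0 < c i) :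
    sRefl (R.simple j) γ ∈ R.pos ∧
    ∃ c' : Fin R.n → ℕ, sRefl (R.simple j) γ = ∑ i, (c' i : ℝ) • R.simple i ∧
      (∀ i, i ≠ j → c' i = c i) ∧
      ((c' j : ℝ) = (c j : ℝ) - ⟪γ, coroot (R.simple j)⟫) := by
  set d : ℝ := ⟪γ, coroot (R.simple j)⟫ with hd
  have hγr : γ ∈ R.roots := R.pos_subset hγ
  have hγ' : sRefl (R.simple j) γ ∈ R.roots :=
    R.refl_mem _ (simple_root_mem R j) _ hγr
  have hrep : sRefl (R.simple j) γ =
      ∑ i, ((c i : ℝ) - if i = j then d else 0) • R.simple i := by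
    rw [sRefl_apply, ← hd]
    simp only [sub_smul, Finset.sum_sub_distrib, ← hc]
    congr 1
    have hterm : ∀ x : Fin R.n, (if x = j then d else 0) • R.simple x =
        if x = j then d • R.simple j else 0 := by
      intro x; by_cases hx : x = j <;> simp [hx]
    rw [Finset.sum_congr rfl fun x _ => hterm x,
      Finset.sum_ite_eq' Finset.univ j (fun _ => d • R.simple j)]
    simp
  obtain ⟨i₀, hi₀j, hi₀⟩ := hne
  have hpos : sRefl (R.simple j) γ ∈ R.pos := by
    rcases root_pos_or_neg R hγ' with h | h
    · exact h
    · exfalso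
      obtain ⟨e, he⟩ := R.pos_combo _ h
      have heq : ∑ i, ((c i : ℝ) - if i = j then d else 0) • R.simple i =
          ∑ i, (-(e i : ℝ)) • R.simple i := by
        rw [← hrep]
        have : sRefl (R.simple j) γ = -∑ i, (e i : ℝ) • R.simple i := by
          rw [← he]; exact (neg_neg _).symm
        rw [this, ← Finset.sum_neg_distrib]
        exact Finset.sum_congr rfl fun i _ => (neg_smul _ _).symm
      have := congrFun (coords_unique R heq) i₀
      simp only [if_neg hi₀j, sub_zero] at this
      have h1 : (0:ℝ) < (c i₀ : ℝ) := by exact_mod_cast hi₀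
      have h2 : (0:ℝ) ≤ (e i₀ : ℝ) := Nat.cast_nonneg _
      linarith
  obtain ⟨c', hc'⟩ := R.pos_combo _ hpos
  have heq2 : (fun i => (c' i : ℝ)) = fun i => (c i : ℝ) - if i = j then d else 0 :=
    coords_unique R (by rw [← hc', ← hrep])
  refine ⟨hpos, c', hc', fun i hij => ?_, ?_⟩
  · have := congrFun heq2 i
    simp only [if_neg hij, sub_zero] at this
    exact_mod_cast this
  · have := congrFun heq2 j
    simpa using this

/-- A vector pairing integrally with all simple coroots is in the weight lattice. -/
lemma mem_lattice_of_simple {v : V}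
    (h : ∀ j, ∃ m : ℤ, ⟪v, coroot (R.simple j)⟫ = (m : ℝ)) :
    v ∈ R.weightLattice := by
  have key : ∀ N : ℕ, ∀ γ ∈ R.pos, ∀ c : Fin R.n → ℕ,
      γ = ∑ i, (c i : ℝ) • R.simple i → (∑ i, c i) ≤ N →
      ∃ m : ℤ, ⟪v, coroot γ⟫ = (m : ℝ) := by
    intro N
    induction N with
    | zero =>
      intro γ hγ c hc hN
      exfalso
      have hall : ∀ i ∈ Finset.univ, c i = 0 :=
        Finset.sum_eq_zero_iff.1 (Nat.le_zero.1 hN)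
      have : γ = 0 := by
        rw [hc]
        exact Finset.sum_eq_zero fun i hi => by rw [hall i hi]; simp
      exact root_ne_zero R (R.pos_subset hγ) this
    | succ N ih =>
      intro γ hγ c hc hN
      obtain ⟨j, hcj, hd, he⟩ := pick_j R hγ hc
      by_cases hsupp : ∃ i, i ≠ j ∧ 0 < c i
      · obtain ⟨hpos, c', hrep, hceq, hcj'⟩ := sRefl_simple_pos R hγ hc j hsupp
        have hd1 : (1:ℝ) ≤ ⟪γ, coroot (R.simple j)⟫ :=
          pairing_ge_one R (simple_root_mem R j) (R.pos_subset hγ) hd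
        have hsum : (∑ i, c' i) ≤ N := by
          have hcast : ((∑ i, c' i : ℕ) : ℝ) = ((∑ i, c i : ℕ) : ℝ) - ⟪γ, coroot (R.simple j)⟫ := by
            push_cast
            rw [Finset.sum_eq_sum_sdiff_singleton_add (Finset.mem_univ j),
                Finset.sum_eq_sum_sdiff_singleton_add (Finset.mem_univ j) (fun i => (c i : ℝ))]
            rw [hcj']
            have : ∑ i ∈ Finset.univ \ {j}, (c' i : ℝ) = ∑ i ∈ Finset.univ \ {j}, (c i : ℝ) := by
              apply Finset.sum_congr rfl
              intro i hi
              rw [hceq i (by simpa using (Finset.mem_sdiff.1 hi).2)]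
            rw [this]; ring
          have h2 : ((∑ i, c' i : ℕ) : ℝ) ≤ (N : ℝ) := by
            have h3 : ((∑ i, c i : ℕ) : ℝ) ≤ (N : ℝ) + 1 := by exact_mod_cast hN
            linarith
          exact_mod_cast h2
        obtain ⟨m', hm'⟩ := ih _ hpos c' hrep hsum
        -- γ = sRefl (simple j) γ', so compute pairing
        obtain ⟨mj, hmj⟩ := h j
        obtain ⟨m₂, hm₂⟩ := R.crystallographic _ (R.pos_subset hpos) (R.simple j) (simple_root_mem R j)
        refine ⟨m' - mj * m₂, ?_⟩
        have hγeq : γ = sRefl (R.simple j) (sRefl (R.simple j) γ) :=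
          (sRefl_involutive _ _).symm
        calc ⟪v, coroot γ⟫
            = ⟪v, sRefl (R.simple j) (coroot (sRefl (R.simple j) γ))⟫ := by
              conv_lhs => rw [hγeq]
              rw [sRefl_coroot]
          _ = ⟪sRefl (R.simple j) v, coroot (sRefl (R.simple j) γ)⟫ := inner_sRefl_right _ _ _
          _ = ⟪v, coroot (sRefl (R.simple j) γ)⟫ -
                ⟪v, coroot (R.simple j)⟫ * ⟪R.simple j, coroot (sRefl (R.simple j) γ)⟫ := by
              rw [sRefl_apply, inner_sub_left, real_inner_smul_left]
          _ = (↑(m' - mj * m₂) : ℝ) := by rw [hm', hmj, hm₂]; push_cast; ring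
      · -- support is only j : γ = simple j
        push_neg at hsupp
        have hγj : γ = (c j : ℝ) • R.simple j := by
          rw [hc]
          rw [Finset.sum_eq_single j]
          · intro i _ hij
            have h0 : c i = 0 := by
              have := hsupp i hij
              omega
            rw [h0]; simp
          · intro hj; exact absurd (Finset.mem_univ j) hj
        have hmem : (c j : ℝ) • R.simple j ∈ R.roots := hγj ▸ R.pos_subset hγ
        rcases R.reduced _ (simple_root_mem R j) _ hmem with hh | hh
        · rw [hγj, hh]; exact h j
        · exfalso
          apply pos_not_neg R hγ
          rw [hγj, hh]
          simpa using R.simple_mem j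
  intro γ hγ
  rcases root_pos_or_neg R hγ with hp | hp
  · obtain ⟨c, hc⟩ := R.pos_combo _ hp
    exact key (∑ i, c i) γ hp c hc le_rfl
  · obtain ⟨c, hc⟩ := R.pos_combo _ hp
    obtain ⟨m, hm⟩ := key (∑ i, c i) (-γ) hp c hc le_rfl
    refine ⟨-m, ?_⟩
    rw [coroot_neg, inner_neg_right] at hm
    push_cast
    linarith

end SF13

namespace SF13
open RealInnerProductSpace

variable {V : Type*} [NormedAddCommGroup V] [InnerProductSpace ℝ V]
variable (R : RootSystemData V)

lemma sRefl_conj (α b : V) : sRefl (sRefl α b) = sRefl α ∘ sRefl b ∘ sRefl α := by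
  funext v
  show sRefl (sRefl α b) v = sRefl α (sRefl b (sRefl α v))
  rw [sRefl_apply (sRefl α b) v, sRefl_coroot, inner_sRefl_right,
    sRefl_apply b (sRefl α v), sRefl_sub, sRefl_involutive, sRefl_smul]

@[simp] lemma wordProd_nil : R.wordProd [] = id := rfl

lemma wordProd_cons (j : Fin R.n) (l : List (Fin R.n)) :
    R.wordProd (j :: l) = sRefl (R.simple j) ∘ R.wordProd l := rfl

lemma wordProd_singleton (j : Fin R.n) (v : V) :
    R.wordProd [j] v = sRefl (R.simple j) v := rfl

lemma wordProd_append (l₁ l₂ : List (Fin R.n)) :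
    R.wordProd (l₁ ++ l₂) = R.wordProd l₁ ∘ R.wordProd l₂ := by
  induction l₁ with
  | nil => rfl
  | cons a l ih => rw [List.cons_append, wordProd_cons, wordProd_cons, ih]; rfl

lemma wordProd_eq_lprod (l : List (Fin R.n)) :
    R.wordProd l = lprod (l.map R.simple) := by
  unfold RootSystemData.wordProd lprod
  rw [List.map_map]
  rfl

lemma support_single {γ : V} (hγ : γ ∈ R.pos) {c : Fin R.n → ℕ}
    (hc : γ = ∑ i, (c i : ℝ) • R.simple i) (j : Fin R.n)
    (hsupp : ∀ i, i ≠ j → c i = 0) : γ = R.simple j := by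
  have hγj : γ = (c j : ℝ) • R.simple j := by
    rw [hc, Finset.sum_eq_single j]
    · intro i _ hij
      rw [hsupp i hij]; simp
    · intro hj; exact absurd (Finset.mem_univ j) hj
  have hmem : (c j : ℝ) • R.simple j ∈ R.roots := hγj ▸ R.pos_subset hγ
  rcases R.reduced _ (simple_root_mem R j) _ hmem with hh | hh
  · rw [hγj, hh]
  · exfalso
    apply pos_not_neg R hγ
    rw [hγj, hh]
    simpa using R.simple_mem j

/-- Subtracting a multiple of a simple root from a positive root with wider
support stays positive, with controlled coordinates. -/
lemma sub_smul_simple_pos {γ : V} (hγ : γ ∈ R.pos) {c : Fin R.n → ℕ}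
    (hc : γ = ∑ i, (c i : ℝ) • R.simple i) (j : Fin R.n)
    (hne : ∃ i, i ≠ j ∧ 0 < c i) {t : ℝ}
    (hroot : γ - t • R.simple j ∈ R.roots) :
    γ - t • R.simple j ∈ R.pos ∧
    ∃ c' : Fin R.n → ℕ, γ - t • R.simple j = ∑ i, (c' i : ℝ) • R.simple i ∧
      (∀ i, i ≠ j → c' i = c i) ∧ ((c' j : ℝ) = (c j : ℝ) - t) := by
  have hrep : γ - t • R.simple j =
      ∑ i, ((c i : ℝ) - if i = j then t else 0) • R.simple i := by
    simp only [sub_smul, Finset.sum_sub_distrib, ← hc]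
    congr 1
    have hterm : ∀ x : Fin R.n, (if x = j then t else 0) • R.simple x =
        if x = j then t • R.simple j else 0 := by
      intro x; by_cases hx : x = j <;> simp [hx]
    rw [Finset.sum_congr rfl fun x _ => hterm x,
      Finset.sum_ite_eq' Finset.univ j (fun _ => t • R.simple j)]
    simp
  obtain ⟨i₀, hi₀j, hi₀⟩ := hne
  have hpos : γ - t • R.simple j ∈ R.pos := by
    rcases root_pos_or_neg R hroot with h | h
    · exact h
    · exfalso
      obtain ⟨e, he⟩ := R.pos_combo _ h
      have heq : ∑ i, ((c i : ℝ) - if i = j then t else 0) • R.simple i =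
          ∑ i, (-(e i : ℝ)) • R.simple i := by
        rw [← hrep]
        have h2 : γ - t • R.simple j = -∑ i, (e i : ℝ) • R.simple i := by
          rw [← he]; exact (neg_neg _).symm
        rw [h2, ← Finset.sum_neg_distrib]
        exact Finset.sum_congr rfl fun i _ => (neg_smul _ _).symm
      have := congrFun (coords_unique R heq) i₀
      simp only [if_neg hi₀j, sub_zero] at this
      have h1 : (0:ℝ) < (c i₀ : ℝ) := by exact_mod_cast hi₀
      have h2 : (0:ℝ) ≤ (e i₀ : ℝ) := Nat.cast_nonneg _
      linarith
  obtain ⟨c', hc'⟩ := R.pos_combo _ hpos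
  have heq2 : (fun i => (c' i : ℝ)) = fun i => (c i : ℝ) - if i = j then t else 0 :=
    coords_unique R (by rw [← hc', ← hrep])
  refine ⟨hpos, c', hc', fun i hij => ?_, ?_⟩
  · have := congrFun heq2 i
    simp only [if_neg hij, sub_zero] at this
    exact_mod_cast this
  · have := congrFun heq2 j
    simpa using this

lemma coord_sum_le {c c' : Fin R.n → ℕ} {j : Fin R.n} {t : ℝ} {N : ℕ}
    (h1 : ∀ i, i ≠ j → c' i = c i) (h2 : (c' j : ℝ) = (c j : ℝ) - t)
    (ht : 1 ≤ t) (hN : (∑ i, c i) ≤ N + 1) : (∑ i, c' i) ≤ N := by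
  have hcast : ((∑ i, c' i : ℕ) : ℝ) = ((∑ i, c i : ℕ) : ℝ) - t := by
    push_cast
    rw [Finset.sum_eq_sum_sdiff_singleton_add (Finset.mem_univ j),
      Finset.sum_eq_sum_sdiff_singleton_add (Finset.mem_univ j) (fun i => (c i : ℝ)), h2]
    have h3 : ∑ i ∈ Finset.univ \ {j}, (c' i : ℝ) = ∑ i ∈ Finset.univ \ {j}, (c i : ℝ) :=
      Finset.sum_congr rfl fun i hi => by
        rw [h1 i (by simpa using (Finset.mem_sdiff.1 hi).2)]
    rw [h3]; ring
  have h4 : ((∑ i, c' i : ℕ) : ℝ) ≤ (N : ℝ) := by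
    have h5 : ((∑ i, c i : ℕ) : ℝ) ≤ (N : ℝ) + 1 := by exact_mod_cast hN
    linarith
  exact_mod_cast h4

end SF13

namespace SF13
open RealInnerProductSpace

variable {V : Type*} [NormedAddCommGroup V] [InnerProductSpace ℝ V]
variable (R : RootSystemData V)

/-- The key lemma: if a positive root `γ` pairs to `0` with a dominant weight,
then `s_γ` is a word in the simple reflections indexed by `I`; if it pairs to
`1`, then `λ - γ` is obtained from `λ` by such a word. -/
lemma EF {lamd : V} (hdom : R.IsDominant lamd) (hlat : lamd ∈ R.weightLattice)
    {I : Set (Fin R.n)}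
    (hI : ∀ j, (⟪lamd, coroot (R.simple j)⟫ = 0 ∨ ⟪lamd, coroot (R.simple j)⟫ = 1) → j ∈ I) :
    ∀ N : ℕ, ∀ γ ∈ R.pos, ∀ c : Fin R.n → ℕ,
      γ = ∑ i, (c i : ℝ) • R.simple i → (∑ i, c i) ≤ N →
      ((⟪lamd, coroot γ⟫ = 0 →
          ∃ u : List (Fin R.n), (∀ i ∈ u, i ∈ I) ∧ R.wordProd u = sRefl γ) ∧
       (⟪lamd, coroot γ⟫ = 1 →
          ∃ u : List (Fin R.n), (∀ i ∈ u, i ∈ I) ∧ R.wordProd u lamd = lamd - γ)) := by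
  intro N
  induction N with
  | zero =>
    intro γ hγ c hc hN
    exfalso
    have hall : ∀ i ∈ Finset.univ, c i = 0 := Finset.sum_eq_zero_iff.1 (Nat.le_zero.1 hN)
    have hγ0 : γ = 0 := by
      rw [hc]
      exact Finset.sum_eq_zero fun i hi => by rw [hall i hi]; simp
    exact root_ne_zero R (R.pos_subset hγ) hγ0
  | succ N ih =>
    intro γ hγ c hc hN
    obtain ⟨j, hcj, hd, he⟩ := pick_j R hγ hc
    have hγr : γ ∈ R.roots := R.pos_subset hγ
    have hαr : R.simple j ∈ R.roots := simple_root_mem R j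
    have hcj'0 : 0 ≤ ⟪lamd, coroot (R.simple j)⟫ := hdom j
    have he1 : 1 ≤ ⟪R.simple j, coroot γ⟫ := pairing_ge_one R hγr hαr he
    have hd1 : 1 ≤ ⟪γ, coroot (R.simple j)⟫ := pairing_ge_one R hαr hγr hd
    by_cases hsupp : ∃ i, i ≠ j ∧ 0 < c i
    case neg =>
      push_neg at hsupp
      have hγj : γ = R.simple j :=
        support_single R hγ hc j (fun i hij => Nat.le_zero.1 (hsupp i hij))
      constructor
      · intro h0
        have hjI : j ∈ I := hI j (Or.inl (by rw [← hγj]; exact h0))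
        refine ⟨[j], by simp [hjI], ?_⟩
        funext v
        rw [wordProd_singleton, hγj]
      · intro h1
        have hjI : j ∈ I := hI j (Or.inr (by rw [← hγj]; exact h1))
        refine ⟨[j], by simp [hjI], ?_⟩
        rw [wordProd_singleton, sRefl_apply, hγj, ← hγj, h1, one_smul, hγj]
    case pos =>
      have hroot' : γ - ⟪γ, coroot (R.simple j)⟫ • R.simple j ∈ R.roots := by
        have h := R.refl_mem _ hαr _ hγr
        rwa [sRefl_apply] at h
      obtain ⟨hpos', c', hrep', hceq', hcj'eq⟩ := sub_smul_simple_pos R hγ hc j hsupp hroot'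
      have hγ'refl : sRefl (R.simple j) γ = γ - ⟪γ, coroot (R.simple j)⟫ • R.simple j :=
        sRefl_apply _ _
      have hsum' : (∑ i, c' i) ≤ N := coord_sum_le R hceq' hcj'eq hd1 hN
      have hγ'r : γ - ⟪γ, coroot (R.simple j)⟫ • R.simple j ∈ R.roots := R.pos_subset hpos'
      have hpair' : ⟪lamd, coroot (γ - ⟪γ, coroot (R.simple j)⟫ • R.simple j)⟫ =
          ⟪lamd, coroot γ⟫ - ⟪lamd, coroot (R.simple j)⟫ * ⟪R.simple j, coroot γ⟫ := by
        rw [← hγ'refl, sRefl_coroot, inner_sRefl_right, sRefl_apply (R.simple j) lamd,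
          inner_sub_left, real_inner_smul_left]
      have hdom' : 0 ≤ ⟪lamd, coroot (γ - ⟪γ, coroot (R.simple j)⟫ • R.simple j)⟫ :=
        dominant_nonneg R hdom hpos'
      obtain ⟨ihE, ihF⟩ := ih _ hpos' c' hrep' hsum'
      have hsjγ' : sRefl (R.simple j) (γ - ⟪γ, coroot (R.simple j)⟫ • R.simple j) = γ := by
        rw [← hγ'refl, sRefl_involutive]
      constructor
      · -- pairing 0 : function-level statement
        intro h0
        have hcjz : ⟪lamd, coroot (R.simple j)⟫ = 0 := by
          have hmul : ⟪lamd, coroot (R.simple j)⟫ * 1 ≤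
              ⟪lamd, coroot (R.simple j)⟫ * ⟪R.simple j, coroot γ⟫ :=
            mul_le_mul_of_nonneg_left he1 hcj'0
          rw [hpair', h0] at hdom'
          linarith
        have hp0 : ⟪lamd, coroot (γ - ⟪γ, coroot (R.simple j)⟫ • R.simple j)⟫ = 0 := by
          rw [hpair', h0, hcjz]; ring
        obtain ⟨u', hu'I, hu'⟩ := ihE hp0
        have hjI : j ∈ I := hI j (Or.inl hcjz)
        refine ⟨j :: (u' ++ [j]), ?_, ?_⟩
        · intro i hi
          simp only [List.mem_cons, List.mem_append, List.mem_singleton, List.not_mem_nil, or_false] at hi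
          rcases hi with rfl | hi | rfl
          exacts [hjI, hu'I i hi, hjI]
        · rw [wordProd_cons, wordProd_append, hu']
          have hsingle : R.wordProd [j] = sRefl (R.simple j) := funext fun v => rfl
          rw [hsingle, ← sRefl_conj, hsjγ']
      · -- pairing 1 : value-level statement
        intro h1
        have hpair1 : ⟪lamd, coroot (γ - ⟪γ, coroot (R.simple j)⟫ • R.simple j)⟫ =
            1 - ⟪lamd, coroot (R.simple j)⟫ * ⟪R.simple j, coroot γ⟫ := by
          rw [hpair', h1]
        by_cases hcjz : ⟪lamd, coroot (R.simple j)⟫ = 0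
        · have hp1 : ⟪lamd, coroot (γ - ⟪γ, coroot (R.simple j)⟫ • R.simple j)⟫ = 1 := by
            rw [hpair1, hcjz]; ring
          obtain ⟨u', hu'I, hu'⟩ := ihF hp1
          have hjI : j ∈ I := hI j (Or.inl hcjz)
          refine ⟨j :: (u' ++ [j]), ?_, ?_⟩
          · intro i hi
            simp only [List.mem_cons, List.mem_append, List.mem_singleton, List.not_mem_nil, or_false] at hi
            rcases hi with rfl | hi | rfl
            exacts [hjI, hu'I i hi, hjI]
          · rw [wordProd_cons]
            show sRefl (R.simple j) (R.wordProd (u' ++ [j]) lamd) = lamd - γ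
            rw [wordProd_append]
            show sRefl (R.simple j) (R.wordProd u' (R.wordProd [j] lamd)) = lamd - γ
            have hsl : R.wordProd [j] lamd = lamd := by
              rw [wordProd_singleton, sRefl_apply, hcjz, zero_smul, sub_zero]
            rw [hsl, hu', sRefl_sub, sRefl_apply (R.simple j) lamd, hcjz, zero_smul,
              sub_zero, hsjγ']
        · -- `⟪lamd, αⱼ∨⟫ ≥ 1`, forcing `⟪lamd,αⱼ∨⟫ = 1`, `⟪αⱼ, γ∨⟫ = 1`
          have hcj1 : 1 ≤ ⟪lamd, coroot (R.simple j)⟫ := by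
            obtain ⟨m, hm⟩ := hlat _ hαr
            have hmpos : (0:ℤ) < m := by
              have := lt_of_le_of_ne hcj'0 (Ne.symm hcjz)
              rw [hm] at this
              exact_mod_cast this
            rw [hm]
            exact_mod_cast hmpos
          have h5 : ⟪lamd, coroot (R.simple j)⟫ * ⟪R.simple j, coroot γ⟫ ≤ 1 := by
            rw [hpair1] at hdom'
            linarith
          have hc1 : ⟪lamd, coroot (R.simple j)⟫ = 1 := by nlinarith
          have he_eq : ⟪R.simple j, coroot γ⟫ = 1 := by nlinarith
          have hp0 : ⟪lamd, coroot (γ - ⟪γ, coroot (R.simple j)⟫ • R.simple j)⟫ = 0 := by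
            rw [hpair1, hc1, he_eq]; ring
          have hjI : j ∈ I := hI j (Or.inr hc1)
          have hfix : sRefl (γ - ⟪γ, coroot (R.simple j)⟫ • R.simple j) lamd = lamd := by
            rw [sRefl_apply, hp0, zero_smul, sub_zero]
          have haj : ⟪R.simple j, coroot (γ - ⟪γ, coroot (R.simple j)⟫ • R.simple j)⟫ = -1 := by
            rw [← hγ'refl, sRefl_coroot, inner_sRefl_right,
              sRefl_apply_self (simple_ne_zero R j), inner_neg_left, he_eq]
          obtain ⟨dz, hdz⟩ := R.crystallographic _ hαr _ hγr
          have hdz1 : (1:ℤ) ≤ dz := by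
            have : (1:ℝ) ≤ (dz:ℝ) := by rw [← hdz]; exact hd1
            exact_mod_cast this
          rcases eq_or_lt_of_le hdz1 with hdz_eq | hdz_gt
          · -- d = 1
            have hd_eq : ⟪γ, coroot (R.simple j)⟫ = 1 := by
              rw [hdz, ← hdz_eq]; norm_num
            obtain ⟨u', hu'I, hu'⟩ := ihE hp0
            refine ⟨u' ++ [j], ?_, ?_⟩
            · intro i hi
              rcases List.mem_append.1 hi with hi | hi
              · exact hu'I i hi
              · rw [List.mem_singleton.1 hi]; exact hjI
            · rw [wordProd_append]
              show R.wordProd u' (R.wordProd [j] lamd) = lamd - γ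
              rw [wordProd_singleton, hu', sRefl_apply (R.simple j) lamd, hc1, one_smul,
                sRefl_sub, hfix]
              have hlast : sRefl (γ - ⟪γ, coroot (R.simple j)⟫ • R.simple j) (R.simple j) = γ := by
                rw [sRefl_apply, haj, hd_eq]
                module
              rw [hlast]
          · -- d ≥ 2
            have hd2 : (2:ℝ) ≤ ⟪γ, coroot (R.simple j)⟫ := by
              rw [hdz]
              exact_mod_cast hdz_gt
            have hδeq : sRefl (γ - ⟪γ, coroot (R.simple j)⟫ • R.simple j) (R.simple j) =
                γ - (⟪γ, coroot (R.simple j)⟫ - 1) • R.simple j := by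
              rw [sRefl_apply, haj]
              module
            have hδroot : γ - (⟪γ, coroot (R.simple j)⟫ - 1) • R.simple j ∈ R.roots := by
              rw [← hδeq]
              exact R.refl_mem _ hγ'r _ hαr
            obtain ⟨hδpos, c'', hrep'', hceq'', hcj''⟩ :=
              sub_smul_simple_pos R hγ hc j hsupp hδroot
            have hsum'' : (∑ i, c'' i) ≤ N :=
              coord_sum_le R hceq'' hcj'' (by linarith) hN
            have hδpair : ⟪lamd, coroot (γ - (⟪γ, coroot (R.simple j)⟫ - 1) • R.simple j)⟫ = 1 := by
              rw [← hδeq, sRefl_coroot, inner_sRefl_right, hfix, hc1]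
            obtain ⟨u'', hu''I, hu''⟩ := (ih _ hδpos c'' hrep'' hsum'').2 hδpair
            refine ⟨j :: u'', ?_, ?_⟩
            · intro i hi
              rcases List.mem_cons.1 hi with rfl | hi
              · exact hjI
              · exact hu''I i hi
            · rw [wordProd_cons]
              show sRefl (R.simple j) (R.wordProd u'' lamd) = lamd - γ
              rw [hu'', sRefl_sub, sRefl_apply (R.simple j) lamd, hc1, one_smul]
              have hsj : sRefl (R.simple j) (γ - (⟪γ, coroot (R.simple j)⟫ - 1) • R.simple j) =
                  γ - R.simple j := by
                rw [sRefl_sub, sRefl_smul, sRefl_apply (R.simple j) γ,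
                  sRefl_apply_self (simple_ne_zero R j)]
                module
              rw [hsj]
              abel

end SF13

namespace SF13
open RealInnerProductSpace

variable {V : Type*} [NormedAddCommGroup V] [InnerProductSpace ℝ V]
variable (R : RootSystemData V)

lemma lprod_sRefl (L : List V) (α x : V) :
    lprod L (sRefl α x) = sRefl (lprod L α) (lprod L x) := by
  rw [sRefl_apply (lprod L α), lprod_coroot, lprod_inner, ← lprod_smul, ← lprod_sub]
  rfl

lemma sRefl_mem_weyl {α : V} (hα : α ∈ R.roots) : sRefl α ∈ R.weyl :=
  ⟨[α], by simpa using hα, funext fun v => rfl⟩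

lemma k_neg {k : V → ℕ} (hk : R.IsWInvariant k) {α : V} (hα : α ∈ R.roots) :
    k (-α) = k α := by
  have h := hk (sRefl α) (sRefl_mem_weyl R hα) α hα
  rwa [sRefl_apply_self (root_ne_zero R hα)] at h

lemma sameComponent_symm {r : V → V → Prop} {x y : V}
    (h : SameComponent r x y) : SameComponent r y x :=
  by
    unfold SameComponent at h ⊢
    induction h with
    | refl => exact Relation.ReflTransGen.refl
    | tail _ hbc ih => exact Relation.ReflTransGen.head hbc.symm ih

lemma fire_chain {k : V → ℕ} {α : V} (hα : α ∈ R.pos) {μ : V}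
    (hμ : μ ∈ R.weightLattice) {m : ℕ} (hpair : ⟪μ, coroot α⟫ = -(m : ℝ))
    (hm : m ≤ k α + 1) :
    ∀ t : ℕ, t ≤ m → SameComponent (R.symFire k) μ (μ + (t : ℝ) • α) := by
  have hαr : α ∈ R.roots := R.pos_subset hα
  have hα0 : α ≠ 0 := root_ne_zero R hαr
  intro t
  induction t with
  | zero => intro _; rw [Nat.cast_zero, zero_smul, add_zero]; exact Relation.ReflTransGen.refl
  | succ t ih =>
    intro ht
    have prev := ih (by omega)
    refine prev.tail (Or.inl ?_)
    have hlat : μ + (t : ℝ) • α ∈ R.weightLattice := by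
      have := lattice_add_zsmul R hμ hαr (t : ℤ)
      simpa using this
    refine ⟨hlat, α, hα, ?_, ?_, ?_⟩
    · push_cast
      module
    · rw [inner_add_left, real_inner_smul_left, inner_self_coroot hα0, hpair]
      have h1 : (m : ℝ) ≤ (k α : ℝ) + 1 := by exact_mod_cast hm
      have h2 : (0 : ℝ) ≤ (t : ℝ) := by positivity
      linarith
    · rw [inner_add_left, real_inner_smul_left, inner_self_coroot hα0, hpair]
      have h1 : (t : ℝ) + 1 ≤ (m : ℝ) := by exact_mod_cast ht
      have h2 : (m : ℝ) ≤ (k α : ℝ) + 1 := by exact_mod_cast hm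
      linarith

lemma same_reflect_pos {k : V → ℕ} {α μ : V} (hα : α ∈ R.pos)
    (hμ : μ ∈ R.weightLattice) {m : ℤ} (hpair : ⟪μ, coroot α⟫ = (m : ℝ))
    (hm : |(m : ℝ)| ≤ (k α : ℝ) + 1) :
    SameComponent (R.symFire k) μ (sRefl α μ) := by
  have hαr : α ∈ R.roots := R.pos_subset hα
  have hα0 : α ≠ 0 := root_ne_zero R hαr
  rcases le_or_gt m 0 with hneg | hpos
  · set t : ℕ := (-m).toNat with htdef
    have hcast : ((t : ℕ) : ℝ) = -(m : ℝ) := by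
      rw [htdef]
      exact_mod_cast congrArg (fun z : ℤ => (z : ℝ)) (Int.toNat_of_nonneg (by omega : (0:ℤ) ≤ -m))
    have hpair' : ⟪μ, coroot α⟫ = -((t : ℕ) : ℝ) := by rw [hcast, hpair]; ring
    have htle : t ≤ k α + 1 := by
      have h1 : ((t : ℕ) : ℝ) ≤ (k α : ℝ) + 1 := by
        rw [hcast]
        calc -(m:ℝ) ≤ |(m:ℝ)| := by rw [abs_eq_max_neg]; exact le_max_right _ _
          _ ≤ (k α : ℝ) + 1 := hm
      exact_mod_cast h1
    have hchain := fire_chain R hα hμ hpair' htle t le_rfl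
    have heq : sRefl α μ = μ + ((t : ℕ) : ℝ) • α := by
      rw [sRefl_apply, hpair, hcast]
      module
    rwa [heq]
  · set t : ℕ := m.toNat with htdef
    have hcast : ((t : ℕ) : ℝ) = (m : ℝ) := by
      rw [htdef]
      exact_mod_cast congrArg (fun z : ℤ => (z : ℝ)) (Int.toNat_of_nonneg (by omega : (0:ℤ) ≤ m))
    have hνlat : sRefl α μ ∈ R.weightLattice := by
      have h := lattice_add_zsmul R hμ hαr (-m)
      have heq : μ + ((-m : ℤ) : ℝ) • α = sRefl α μ := by
        rw [sRefl_apply, hpair]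
        push_cast
        module
      rwa [heq] at h
    have hνpair : ⟪sRefl α μ, coroot α⟫ = -((t : ℕ) : ℝ) := by
      rw [sRefl_apply, inner_sub_left, real_inner_smul_left, inner_self_coroot hα0,
        hpair, hcast]
      ring
    have htle : t ≤ k α + 1 := by
      have h1 : ((t : ℕ) : ℝ) ≤ (k α : ℝ) + 1 := by
        rw [hcast]
        calc (m:ℝ) ≤ |(m:ℝ)| := le_abs_self _
          _ ≤ (k α : ℝ) + 1 := hm
      exact_mod_cast h1
    have hchain := fire_chain R hα hνlat hνpair htle t le_rfl
    have heq : sRefl α μ + ((t : ℕ) : ℝ) • α = μ := by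
      rw [sRefl_apply, hpair, hcast]
      module
    rw [heq] at hchain
    exact sameComponent_symm hchain

lemma same_reflect {k : V → ℕ} (hk : R.IsWInvariant k) {β μ : V} (hβ : β ∈ R.roots)
    (hμ : μ ∈ R.weightLattice) {m : ℤ} (hpair : ⟪μ, coroot β⟫ = (m : ℝ))
    (hm : |(m : ℝ)| ≤ (k β : ℝ) + 1) :
    SameComponent (R.symFire k) μ (sRefl β μ) := by
  rcases root_pos_or_neg R hβ with hp | hp
  · exact same_reflect_pos R hp hμ hpair hm
  · have hpair' : ⟪μ, coroot (-β)⟫ = ((-m : ℤ) : ℝ) := by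
      rw [coroot_neg, inner_neg_right, hpair]
      push_cast
      ring
    have hk' : k (-β) = k β := k_neg R hk hβ
    have hm' : |((-m : ℤ) : ℝ)| ≤ (k (-β) : ℝ) + 1 := by
      rw [hk']
      push_cast
      rwa [abs_neg]
    have h := same_reflect_pos R hp hμ hpair' hm'
    rwa [show sRefl (-β) = sRefl β from sRefl_neg β] at h

end SF13

/-- The connected component of symmetric interval-firing containing `η_𝐤(λ)`
contains the orbit `w_λ(W_{I^{0,1}_λ}(η_𝐤(λ_dom)))`; for `𝐤 = 0` it equals
`w_λ(W_{I^{0,1}_λ}(λ_dom))`. -/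
theorem statement13 (R : RootSystemData V)
    (fw : Fin R.n → V)
    (hfw : ∀ i j, ⟪fw i, coroot (R.simple j)⟫ = if i = j then (1 : ℝ) else 0)
    (dm : V → V)
    (hdm : ∀ lam ∈ R.weightLattice, dm lam ∈ R.orbit lam ∧ R.IsDominant (dm lam))
    (wl : V → V → V)
    (hwl : ∀ lam ∈ R.weightLattice, wl lam ∈ R.weyl ∧ wl lam (dm lam) = lam ∧
      ∀ w ∈ R.weyl, w (dm lam) = lam → R.coxLen (wl lam) ≤ R.coxLen w)
    (k : V → ℕ) (hk : R.IsWInvariant k)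
    (lam : V) (hlam : lam ∈ R.weightLattice)
    (hno : ∀ α ∈ R.pos, ⟪lam, coroot α⟫ ≠ -1) :
    (∀ mu ∈ (wl lam) ''
        (R.orbitI (R.I01 dm lam) (dm lam + ∑ i, (k (R.simple i) : ℝ) • fw i)),
      SameComponent (R.symFire k) (etaMap R fw wl k lam) mu) ∧
    ((∀ α, k α = 0) →
      {mu | SameComponent (R.symFire k) (etaMap R fw wl k lam) mu}
        = (wl lam) '' (R.orbitI (R.I01 dm lam) (dm lam))) := by
  classical
  obtain ⟨hdmorb, hdom⟩ := hdm lam hlam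
  obtain ⟨hwlW, hwlval, -⟩ := hwl lam hlam
  obtain ⟨w0, hw0W, hw0eq⟩ := hdmorb
  obtain ⟨L0, hL0, hw0def⟩ := hw0W
  have hDlat : dm lam ∈ R.weightLattice := by
    rw [hw0eq, hw0def]
    exact SF13.lprod_lattice R hL0 hlam
  obtain ⟨Lw, hLw, hwdef⟩ := hwlW
  have hwl_lprod : wl lam = SF13.lprod Lw := hwdef
  set ρ : V := ∑ i, (k (R.simple i) : ℝ) • fw i with hρdef
  have hρpair : ∀ j, ⟪ρ, coroot (R.simple j)⟫ = (k (R.simple j) : ℝ) := by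
    intro j
    rw [hρdef, sum_inner]
    have hterm : ∀ i, ⟪(k (R.simple i) : ℝ) • fw i, coroot (R.simple j)⟫ =
        if i = j then (k (R.simple j) : ℝ) else 0 := by
      intro i
      rw [real_inner_smul_left, hfw i j]
      by_cases h : i = j <;> simp [h]
    rw [Finset.sum_congr rfl fun i _ => hterm i,
      Finset.sum_ite_eq' Finset.univ j (fun _ => (k (R.simple j) : ℝ))]
    simp
  have hρlat : ρ ∈ R.weightLattice :=
    SF13.mem_lattice_of_simple R
      (fun j => ⟨(k (R.simple j) : ℤ), by rw [hρpair j]; push_cast; ring⟩)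
  have hνlat : dm lam + ρ ∈ R.weightLattice := SF13.lattice_add R hDlat hρlat
  have hη : etaMap R fw wl k lam = wl lam (dm lam + ρ) := by
    have h0 : etaMap R fw wl k lam = lam + wl lam ρ := rfl
    rw [h0, hwl_lprod, SF13.lprod_add, ← hwl_lprod, hwlval]
  have hI : ∀ j, (⟪dm lam, coroot (R.simple j)⟫ = 0 ∨
      ⟪dm lam, coroot (R.simple j)⟫ = 1) → j ∈ R.I01 dm lam := fun _ h => h
  -- composing `wl lam` with a word in simple reflections is a product of
  -- reflections along a list of roots
  have hroots : ∀ l : List (Fin R.n), ∀ a ∈ Lw ++ l.map R.simple, a ∈ R.roots := by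
    intro l a ha
    rcases List.mem_append.1 ha with h | h
    · exact hLw a h
    · obtain ⟨i, _, rfl⟩ := List.mem_map.1 h
      exact SF13.simple_root_mem R i
  have hcomp : ∀ (l : List (Fin R.n)) (x : V),
      wl lam (R.wordProd l x) = SF13.lprod (Lw ++ l.map R.simple) x := by
    intro l x
    rw [SF13.lprod_append, Function.comp_apply, hwl_lprod, SF13.wordProd_eq_lprod]
  -- Part 1 core claim
  have claim : ∀ l : List (Fin R.n), (∀ i ∈ l, i ∈ R.I01 dm lam) →
      SameComponent (R.symFire k) (wl lam (dm lam + ρ))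
        (wl lam (R.wordProd l (dm lam + ρ))) := by
    intro l
    induction l using List.reverseRecOn with
    | nil => intro _; exact Relation.ReflTransGen.refl
    | append_singleton l j ihl =>
      intro hmem
      have hl : ∀ i ∈ l, i ∈ R.I01 dm lam :=
        fun i hi => hmem i (List.mem_append.2 (Or.inl hi))
      have hj : j ∈ R.I01 dm lam :=
        hmem j (List.mem_append.2 (Or.inr (List.mem_singleton.2 rfl)))
      have hjcases : ⟪dm lam, coroot (R.simple j)⟫ = 0 ∨
          ⟪dm lam, coroot (R.simple j)⟫ = 1 := hj
      have hLg := hroots l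
      have htarget : wl lam (R.wordProd (l ++ [j]) (dm lam + ρ)) =
          sRefl (SF13.lprod (Lw ++ l.map R.simple) (R.simple j))
            (SF13.lprod (Lw ++ l.map R.simple) (dm lam + ρ)) := by
        rw [SF13.wordProd_append]
        show wl lam (R.wordProd l (R.wordProd [j] (dm lam + ρ))) = _
        rw [SF13.wordProd_singleton, hcomp, SF13.lprod_sRefl]
      have hβr : SF13.lprod (Lw ++ l.map R.simple) (R.simple j) ∈ R.roots :=
        SF13.lprod_root_mem R hLg (SF13.simple_root_mem R j)
      have hkβ : k (SF13.lprod (Lw ++ l.map R.simple) (R.simple j)) = k (R.simple j) :=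
        hk _ (SF13.lprod_mem_weyl R hLg) _ (SF13.simple_root_mem R j)
      have hglat : SF13.lprod (Lw ++ l.map R.simple) (dm lam + ρ) ∈ R.weightLattice :=
        SF13.lprod_lattice R hLg hνlat
      have hpairg : ⟪SF13.lprod (Lw ++ l.map R.simple) (dm lam + ρ),
          coroot (SF13.lprod (Lw ++ l.map R.simple) (R.simple j))⟫ =
          ⟪dm lam, coroot (R.simple j)⟫ + (k (R.simple j) : ℝ) := by
        rw [SF13.lprod_coroot, SF13.lprod_inner, inner_add_left, hρpair]
      rcases hjcases with h01 | h01
      · have hstep := SF13.same_reflect R hk hβr hglat (m := (k (R.simple j) : ℤ))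
          (by rw [hpairg, h01]; push_cast; ring)
          (by rw [hkβ, abs_of_nonneg (by positivity)]; push_cast; linarith)
        refine Relation.ReflTransGen.trans (ihl hl) ?_
        rw [htarget, hcomp]
        exact hstep
      · have hstep := SF13.same_reflect R hk hβr hglat (m := (k (R.simple j) : ℤ) + 1)
          (by rw [hpairg, h01]; push_cast; ring)
          (by rw [hkβ, abs_of_nonneg (by positivity)]; push_cast; linarith)
        refine Relation.ReflTransGen.trans (ihl hl) ?_
        rw [htarget, hcomp]
        exact hstep
  constructor
  · -- Part 1
    intro mu hmu
    obtain ⟨x, hx, rfl⟩ := hmu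
    obtain ⟨w', hw'I, rfl⟩ := hx
    obtain ⟨l, hlI, rfl⟩ := hw'I
    rw [hη]
    exact claim l hlI
  · -- Part 2
    intro hk0
    have hρ0 : ρ = 0 := by
      rw [hρdef]
      apply Finset.sum_eq_zero
      intro i _
      rw [hk0]
      simp
    ext mu
    simp only [Set.mem_setOf_eq]
    constructor
    · intro h
      induction h with
      | refl =>
        refine ⟨dm lam, ⟨R.wordProd [], ⟨[], by simp, rfl⟩, rfl⟩, ?_⟩
        show wl lam (dm lam) = etaMap R fw wl k lam
        rw [hη, hρ0, add_zero]
      | tail hab hbc ih =>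
        obtain ⟨x, hx, hbx⟩ := ih
        obtain ⟨w', hw'I, rfl⟩ := hx
        obtain ⟨l, hlI, rfl⟩ := hw'I
        rename_i b c
        -- extract the reflection step
        have hstep : ∃ α ∈ R.pos, c = sRefl α b ∧
            (⟪b, coroot α⟫ = 1 ∨ ⟪b, coroot α⟫ = -1) := by
          rcases hbc with ⟨hblat, α, hαpos, hceq, h1, h2⟩ | ⟨hclat, α, hαpos, hbeq, h1, h2⟩
          · rw [hk0 α] at h1 h2
            push_cast at h1 h2
            have hp : ⟪b, coroot α⟫ = -1 := by linarith
            refine ⟨α, hαpos, ?_, Or.inr hp⟩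
            rw [hceq, SF13.sRefl_apply, hp]
            module
          · rw [hk0 α] at h1 h2
            push_cast at h1 h2
            have hpc : ⟪c, coroot α⟫ = -1 := by linarith
            have hα0 : α ≠ 0 := SF13.root_ne_zero R (R.pos_subset hαpos)
            have hp : ⟪b, coroot α⟫ = 1 := by
              rw [hbeq, inner_add_left, SF13.inner_self_coroot hα0, hpc]
              ring
            refine ⟨α, hαpos, ?_, Or.inl hp⟩
            rw [SF13.sRefl_apply, hp, one_smul, hbeq]
            abel
        obtain ⟨α, hαpos, hceq, hpm⟩ := hstep
        have hαr : α ∈ R.roots := R.pos_subset hαpos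
        have hLg := hroots l
        have hgb : b = SF13.lprod (Lw ++ l.map R.simple) (dm lam) := hbx.symm.trans (hcomp l _)
        have hγr : SF13.lprod (Lw ++ l.map R.simple).reverse α ∈ R.roots :=
          SF13.lprod_root_mem R (SF13.reverse_roots R hLg) hαr
        have hgγ : SF13.lprod (Lw ++ l.map R.simple)
            (SF13.lprod (Lw ++ l.map R.simple).reverse α) = α :=
          SF13.lprod_reverse_apply' _ _
        have hpairγ : ⟪dm lam, coroot (SF13.lprod (Lw ++ l.map R.simple).reverse α)⟫ =
            ⟪b, coroot α⟫ := by
          conv_rhs => rw [hgb, ← hgγ, SF13.lprod_coroot, SF13.lprod_inner]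
        have hcγ : c = wl lam (R.wordProd l
            (sRefl (SF13.lprod (Lw ++ l.map R.simple).reverse α) (dm lam))) := by
          rw [hcomp, SF13.lprod_sRefl, hgγ, ← hgb, hceq]
        -- find a word `u` with `wordProd u (dm lam) = sRefl γ (dm lam)`
        have hkey : ∃ u : List (Fin R.n), (∀ i ∈ u, i ∈ R.I01 dm lam) ∧
            R.wordProd u (dm lam) =
              sRefl (SF13.lprod (Lw ++ l.map R.simple).reverse α) (dm lam) := by
          rcases hpm with hp1 | hpm1
          · have hpγ : ⟪dm lam, coroot (SF13.lprod (Lw ++ l.map R.simple).reverse α)⟫ = 1 :=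
              hpairγ.trans hp1
            have hγpos : SF13.lprod (Lw ++ l.map R.simple).reverse α ∈ R.pos := by
              rcases SF13.root_pos_or_neg R hγr with h | h
              · exact h
              · exfalso
                have := SF13.dominant_nonneg R hdom h
                rw [SF13.coroot_neg, inner_neg_right, hpγ] at this
                linarith
            obtain ⟨cc, hcc⟩ := R.pos_combo _ hγpos
            obtain ⟨u, huI, hu⟩ :=
              (SF13.EF R hdom hDlat hI (∑ i, cc i) _ hγpos cc hcc le_rfl).2 hpγ
            refine ⟨u, huI, ?_⟩
            rw [hu, SF13.sRefl_apply, hpγ, one_smul]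
          · have hpγ : ⟪dm lam, coroot (SF13.lprod (Lw ++ l.map R.simple).reverse α)⟫ = -1 :=
              hpairγ.trans hpm1
            have hpγ₂ : ⟪dm lam, coroot (-(SF13.lprod (Lw ++ l.map R.simple).reverse α))⟫ = 1 := by
              rw [SF13.coroot_neg, inner_neg_right, hpγ]
              ring
            have hγ₂pos : -(SF13.lprod (Lw ++ l.map R.simple).reverse α) ∈ R.pos := by
              rcases SF13.root_pos_or_neg R hγr with h | h
              · exfalso
                have := SF13.dominant_nonneg R hdom h
                rw [hpγ] at this
                linarith
              · exact h
            obtain ⟨cc, hcc⟩ := R.pos_combo _ hγ₂pos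
            obtain ⟨u, huI, hu⟩ :=
              (SF13.EF R hdom hDlat hI (∑ i, cc i) _ hγ₂pos cc hcc le_rfl).2 hpγ₂
            refine ⟨u, huI, ?_⟩
            rw [hu, ← SF13.sRefl_neg, SF13.sRefl_apply, hpγ₂, one_smul]
        obtain ⟨u, huI, hu⟩ := hkey
        refine ⟨R.wordProd (l ++ u) (dm lam),
          ⟨R.wordProd (l ++ u), ⟨l ++ u, ?_, rfl⟩, rfl⟩, ?_⟩
        · intro i hi
          rcases List.mem_append.1 hi with h | h
          · exact hlI i h
          · exact huI i h
        · rw [SF13.wordProd_append]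
          show wl lam (R.wordProd l (R.wordProd u (dm lam))) = c
          rw [hu, ← hcγ]
    · intro h
      obtain ⟨x, hx, rfl⟩ := h
      obtain ⟨w', hw'I, rfl⟩ := hx
      obtain ⟨l, hlI, rfl⟩ := hw'I
      have hcl := claim l hlI
      rw [hρ0, add_zero] at hcl
      rw [hη, hρ0, add_zero]
      exact hcl
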